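/- Let P be a nontrivial finite abelian p-group. Then P has a characteristic subgroup of order p if and only if P is the direct product of a cyclic group of order p^e (for some e ≥ 1) and a group of exponent strictly less than p^e. Moreover, in that case the unique characteristic subgroup of order p is P^{p^{e-1}} (the image of the p^{e-1}-power map), where p^e is the exponent of P. -/

import Mathlib

-- embedding ZMod m →+ ZMod n for m ∣ n
lemma aux_zmod_emb (m n : ℕ) [NeZero m] [NeZero n] (h : m ∣ n) :
    ∃ f : ZMod m →+ ZMod n, Function.Injective f := by
  have hm0 : (m : ℕ) ≠ 0 := NeZero.ne m
  have hn0 : (n : ℕ) ≠ 0 := NeZero.ne n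
  have hd0 : n / m ≠ 0 := by
    intro h0
    exact hn0 (by rw [← Nat.div_mul_cancel h, h0, zero_mul])
  refine ⟨ZMod.lift m ⟨(n / m) • (Int.castAddHom (ZMod n)), ?_⟩, ?_⟩
  · show (n / m) • ((m : ℤ) : ZMod n) = 0
    rw [nsmul_eq_mul]
    push_cast
    rw [← Nat.cast_mul, Nat.div_mul_cancel h, ZMod.natCast_self]
  · rw [injective_iff_map_eq_zero]
    intro a ha
    have hval : ((a.val : ℤ) : ZMod m) = a := by
      push_cast
      exact ZMod.natCast_rightInverse a
    rw [← hval, ZMod.lift_coe] at ha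
    have : ((n / m * a.val : ℕ) : ZMod n) = 0 := by
      push_cast
      rw [← ha]
      show _ = (n / m) • ((a.val : ℤ) : ZMod n)
      rw [nsmul_eq_mul]
      push_cast
      ring
    rw [ZMod.natCast_eq_zero_iff] at this
    have hdvd : m ∣ a.val := by
      have h2 : n / m * m ∣ n / m * a.val := by rwa [Nat.div_mul_cancel h]
      exact (mul_dvd_mul_iff_left hd0).mp h2
    have : a.val = 0 := Nat.eq_zero_of_dvd_of_lt hdvd a.val_lt
    rw [← hval]
    simp [this]

-- separation of points by characters into Multiplicative (ZMod N)
lemma aux_char_sep {Q : Type*} [CommGroup Q] [Finite Q] {N : ℕ} [NeZero N]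
    (hQ : Monoid.exponent Q ∣ N) {b : Q} (hb : b ≠ 1) :
    ∃ f : Q →* Multiplicative (ZMod N), f b ≠ 1 := by
  classical
  obtain ⟨ι, _, n, h1, ⟨ψ⟩⟩ := CommGroup.equiv_prod_multiplicative_zmod_of_finite Q
  have hdvd : ∀ i, n i ∣ N := by
    intro i
    refine dvd_trans ?_ hQ
    have : n i = orderOf (ψ.symm <| Pi.mulSingle i <| .ofAdd 1) := by
      simpa only [MulEquiv.orderOf_eq, orderOf_piMulSingle, orderOf_ofAdd_eq_addOrderOf]
        using (ZMod.addOrderOf_one (n i)).symm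
    exact this ▸ Monoid.order_dvd_exponent _
  obtain ⟨i, hi⟩ : ∃ i, ψ b i ≠ 1 := by
    by_contra hc
    push_neg at hc
    exact hb ((MulEquiv.map_eq_one_iff ψ).mp (funext hc))
  have : NeZero (n i) := ⟨by have := h1 i; omega⟩
  obtain ⟨g, hg⟩ := aux_zmod_emb (n i) N (hdvd i)
  refine ⟨(AddMonoidHom.toMultiplicative g).comp
    ((Pi.evalMonoidHom (fun j => Multiplicative (ZMod (n j))) i).comp ψ.toMonoidHom), ?_⟩
  simp only [MonoidHom.comp_apply, Pi.evalMonoidHom_apply, MulEquiv.coe_toMonoidHom]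
  intro hone
  apply hi
  have : g ((ψ b i).toAdd) = 0 := hone
  have h0 : (ψ b i).toAdd = (0 : ZMod (n i)) := hg (by rw [this, map_zero])
  exact toAdd_eq_zero.mp h0

-- shear automorphisms
def shearFst {A B : Type*} [CommGroup A] [CommGroup B] (f : B →* A) : (A × B) ≃* (A × B) where
  toFun x := (x.1 * f x.2, x.2)
  invFun x := (x.1 * (f x.2)⁻¹, x.2)
  left_inv x := by simp
  right_inv x := by simp
  map_mul' x y := by
    simp only [Prod.fst_mul, Prod.snd_mul, map_mul, Prod.mk_mul_mk]
    rw [mul_mul_mul_comm]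

def shearSnd {A B : Type*} [CommGroup A] [CommGroup B] (f : A →* B) : (A × B) ≃* (A × B) where
  toFun x := (x.1, x.2 * f x.1)
  invFun x := (x.1, x.2 * (f x.1)⁻¹)
  left_inv x := by simp
  right_inv x := by simp
  map_mul' x y := by
    simp only [Prod.fst_mul, Prod.snd_mul, map_mul, Prod.mk_mul_mk]
    rw [mul_mul_mul_comm]

-- the range of the power map is characteristic
lemma aux_char_powRange {G : Type*} [CommGroup G] (n : ℕ) :
    ((powMonoidHom n : G →* G).range).Characteristic := by
  constructor
  intro φ
  ext x
  simp only [Subgroup.mem_comap, MonoidHom.mem_range, powMonoidHom_apply,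
    MulEquiv.coe_toMonoidHom]
  constructor
  · rintro ⟨y, hy⟩
    refine ⟨φ.symm y, ?_⟩
    have := congrArg φ.symm hy
    rwa [map_pow, MulEquiv.symm_apply_apply] at this
  · rintro ⟨y, rfl⟩
    exact ⟨φ y, by rw [map_pow]⟩

-- transport of characteristic along a MulEquiv
lemma aux_char_map {G H : Type*} [Group G] [Group H] (ψ : G ≃* H) (K : Subgroup G)
    (h : K.Characteristic) : (K.map ψ.toMonoidHom).Characteristic := by
  constructor
  intro φ
  have hfix := h.fixed ((ψ.trans φ).trans ψ.symm)
  have key : ∀ y : H, (ψ.symm (φ y) ∈ K ↔ ψ.symm y ∈ K) := by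
    intro y
    have := Subgroup.ext_iff.mp hfix (ψ.symm y)
    simpa [Subgroup.mem_comap] using this
  ext x
  simp only [Subgroup.mem_comap, MulEquiv.coe_toMonoidHom, Subgroup.mem_map_equiv]
  exact key x

lemma aux_card_map {G H : Type*} [Group G] [Group H] (ψ : G ≃* H) (K : Subgroup G) :
    Nat.card (K.map ψ.toMonoidHom) = Nat.card K :=
  (Nat.card_congr (K.equivMapOfInjective ψ.toMonoidHom ψ.injective).toEquiv).symm

lemma aux_map_powRange {G H : Type*} [CommGroup G] [CommGroup H] (ψ : G ≃* H) (n : ℕ) :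
    ((powMonoidHom n : G →* G).range).map ψ.toMonoidHom = (powMonoidHom n : H →* H).range := by
  ext x
  simp only [Subgroup.mem_map, MonoidHom.mem_range, powMonoidHom_apply,
    MulEquiv.coe_toMonoidHom]
  constructor
  · rintro ⟨g, ⟨y, rfl⟩, rfl⟩
    exact ⟨ψ y, by rw [map_pow]⟩
  · rintro ⟨y, rfl⟩
    exact ⟨(ψ.symm y) ^ n, ⟨ψ.symm y, rfl⟩, by rw [map_pow, MulEquiv.apply_symm_apply]⟩

-- a subgroup of prime order is generated by any nontrivial element
lemma aux_eq_zpowers {G : Type*} [Group G] [Finite G] {p : ℕ} (hp : p.Prime) {H : Subgroup G}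
    (hH : Nat.card H = p) {h : G} (hh : h ∈ H) (h1 : h ≠ 1) :
    H = Subgroup.zpowers h ∧ orderOf h = p := by
  have hdvd : orderOf h ∣ p := hH ▸ H.orderOf_dvd_natCard hh
  have ho : orderOf h = p := by
    rcases (Nat.dvd_prime hp).mp hdvd with h' | h'
    · exact absurd (orderOf_eq_one_iff.mp h') h1
    · exact h'
  have hle : Subgroup.zpowers h ≤ H := Subgroup.zpowers_le.mpr hh
  refine ⟨(Subgroup.eq_of_le_of_card_ge hle ?_).symm, ho⟩
  rw [hH, Nat.card_zpowers, ho]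

-- p-torsion of ZMod (p^e) is contained in the image of multiplication by p^(e-1)
lemma aux_zmod_torsion {p e : ℕ} (hp : p.Prime) (he : 1 ≤ e) (a : ZMod (p ^ e))
    (ha : (p : ZMod (p ^ e)) * a = 0) : ∃ x : ZMod (p ^ e), (p ^ (e - 1) : ℕ) * x = a := by
  have : NeZero (p ^ e) := ⟨pow_ne_zero e hp.pos.ne'⟩
  have hval : ((a.val : ℕ) : ZMod (p ^ e)) = a := ZMod.natCast_rightInverse a
  have h0 : ((p * a.val : ℕ) : ZMod (p ^ e)) = 0 := by
    push_cast
    rw [hval, ha]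
  rw [ZMod.natCast_eq_zero_iff] at h0
  have hdvd : p ^ (e - 1) ∣ a.val := by
    have h1 : p * p ^ (e - 1) ∣ p * a.val := by
      rw [← pow_succ']
      have : e - 1 + 1 = e := by omega
      rwa [this]
    exact (mul_dvd_mul_iff_left hp.pos.ne').mp h1
  obtain ⟨x, hx⟩ := hdvd
  exact ⟨(x : ZMod (p ^ e)), by rw [← Nat.cast_mul, ← hx, hval]⟩

lemma aux_exp_mult_zmod (m : ℕ) [NeZero m] :
    Monoid.exponent (Multiplicative (ZMod m)) = m := by
  rw [IsCyclic.exponent_eq_card, Nat.card_eq_fintype_card, Fintype.card_multiplicative, ZMod.card]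

-- splitting off a cyclic factor of maximal order
lemma aux_split (p e : ℕ) (hp : p.Prime) (he : 1 ≤ e) (G : Type*) [CommGroup G] [Finite G]
    (hexp : Monoid.exponent G = p ^ e) :
    ∃ (Q : Type) (_ : CommGroup Q) (_ : Fintype Q),
      Nonempty (G ≃* Multiplicative (ZMod (p ^ e)) × Q) := by
  classical
  obtain ⟨ι, _, n, h1, ⟨ψ⟩⟩ := CommGroup.equiv_prod_multiplicative_zmod_of_finite G
  have hNZ : ∀ i, NeZero (n i) := fun i => ⟨by have := h1 i; omega⟩
  have hexp2 : Monoid.exponent ((i : ι) → Multiplicative (ZMod (n i))) = p ^ e := by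
    rw [← Monoid.exponent_eq_of_mulEquiv ψ, hexp]
  have hfun : (fun i => Monoid.exponent (Multiplicative (ZMod (n i)))) = n :=
    funext fun i => @aux_exp_mult_zmod (n i) (hNZ i)
  have hlcm : Finset.univ.lcm n = p ^ e := by
    rw [← hfun, ← Monoid.exponent_pi, hexp2]
  have hdvd : ∀ i, n i ∣ p ^ e := fun i => hlcm ▸ Finset.dvd_lcm (Finset.mem_univ i)
  have hex : ∃ i₀, n i₀ = p ^ e := by
    by_contra hc
    push_neg at hc
    have hstep : ∀ i ∈ Finset.univ, n i ∣ p ^ (e - 1) := by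
      intro i _
      obtain ⟨k, hk, hnk⟩ := (Nat.dvd_prime_pow hp).mp (hdvd i)
      have hk' : k ≤ e - 1 := by
        rcases Nat.lt_or_ge k e with h | h
        · omega
        · exact absurd (hnk.trans (by rw [Nat.le_antisymm hk h])) (hc i)
      exact hnk ▸ pow_dvd_pow p hk'
    have : p ^ e ∣ p ^ (e - 1) := hlcm ▸ Finset.lcm_dvd hstep
    have hlt : p ^ (e - 1) < p ^ e := Nat.pow_lt_pow_right hp.one_lt (by omega)
    exact absurd (Nat.le_of_dvd (pow_pos hp.pos _) this) (by omega)
  obtain ⟨i₀, hi₀⟩ := hex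
  let E : ((i : ι) → Multiplicative (ZMod (n i))) ≃*
      (Multiplicative (ZMod (n i₀)) × ∀ j : {j : ι // j ≠ i₀}, Multiplicative (ZMod (n j.1))) :=
    { Equiv.piSplitAt i₀ (fun i => Multiplicative (ZMod (n i))) with map_mul' := fun x y => rfl }
  have main := ψ.trans E
  rw [hi₀] at main
  exact ⟨∀ j : {j : ι // j ≠ i₀}, Multiplicative (ZMod (n j.1)), inferInstance, inferInstance,
    ⟨main⟩⟩

-- the range of the p^(e-1) power map in the split product: generator and cardinality
lemma aux_R (p e : ℕ) (hp : p.Prime) (he : 1 ≤ e) (Q : Type*) [CommGroup Q] [Finite Q]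
    (hQ : Monoid.exponent Q ∣ p ^ (e - 1)) :
    (powMonoidHom (p ^ (e - 1)) :
        (Multiplicative (ZMod (p ^ e)) × Q) →* (Multiplicative (ZMod (p ^ e)) × Q)).range =
      Subgroup.zpowers ((Multiplicative.ofAdd ((p ^ (e - 1) : ℕ) : ZMod (p ^ e)), 1)) ∧
    Nat.card ((powMonoidHom (p ^ (e - 1)) :
        (Multiplicative (ZMod (p ^ e)) × Q) →* (Multiplicative (ZMod (p ^ e)) × Q)).range) = p := by
  have hpe : (p : ℕ) ^ e ≠ 0 := pow_ne_zero e hp.pos.ne'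
  have : NeZero (p ^ e) := ⟨hpe⟩
  set m := p ^ (e - 1) with hm
  set g₀ : Multiplicative (ZMod (p ^ e)) × Q :=
    (Multiplicative.ofAdd ((m : ℕ) : ZMod (p ^ e)), 1) with hg₀
  have heq : (powMonoidHom m :
      (Multiplicative (ZMod (p ^ e)) × Q) →* (Multiplicative (ZMod (p ^ e)) × Q)).range =
      Subgroup.zpowers g₀ := by
    apply le_antisymm
    · rintro x ⟨⟨a, q⟩, rfl⟩
      have hq : q ^ m = 1 := by
        have := Monoid.order_dvd_exponent q
        exact orderOf_dvd_iff_pow_eq_one.mp (this.trans hQ)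
      rw [powMonoidHom_apply, Prod.pow_mk, hq]
      set a' : ZMod (p ^ e) := a.toAdd with ha'
      have hpow : a ^ m = Multiplicative.ofAdd ((m : ZMod (p ^ e)) * a') := by
        calc a ^ m = Multiplicative.ofAdd a' ^ m := by rw [ha', ofAdd_toAdd]
        _ = Multiplicative.ofAdd (m • a') := by rw [← ofAdd_nsmul]
        _ = Multiplicative.ofAdd ((m : ZMod (p ^ e)) * a') := by rw [nsmul_eq_mul]
      refine Subgroup.mem_zpowers_iff.mpr ⟨(a'.val : ℤ), ?_⟩
      have hzp : g₀ ^ ((a'.val : ℤ)) =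
          (Multiplicative.ofAdd (((a'.val : ℤ)) • ((m : ℕ) : ZMod (p ^ e))), 1) := by
        rw [hg₀, Prod.pow_mk, one_zpow]
        congr 1
      have hz : ((a'.val : ℤ)) • ((m : ℕ) : ZMod (p ^ e)) = (m : ZMod (p ^ e)) * a' := by
        rw [zsmul_eq_mul]
        have hcast : ((a'.val : ℤ) : ZMod (p ^ e)) = a' := by
          push_cast
          exact ZMod.natCast_rightInverse a'
        rw [hcast, mul_comm]
      rw [hzp, hz, hpow]
    · rw [Subgroup.zpowers_le]
      refine ⟨(Multiplicative.ofAdd ((1 : ℕ) : ZMod (p ^ e)), 1), ?_⟩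
      rw [powMonoidHom_apply, Prod.pow_mk, one_pow]
      congr 1
      rw [← ofAdd_nsmul]
      congr 1
      rw [nsmul_eq_mul]
      push_cast
      ring
  refine ⟨heq, ?_⟩
  rw [heq, Nat.card_zpowers, Prod.orderOf_mk, orderOf_one, Nat.lcm_one_right,
    orderOf_ofAdd_eq_addOrderOf, ZMod.addOrderOf_coe _ hpe]
  rw [Nat.gcd_eq_right (pow_dvd_pow p (by omega)), Nat.pow_div (by omega) hp.pos]
  have h1 : e - (e - 1) = 1 := by omega
  rw [h1, pow_one]

-- main lemma about characteristic subgroups of order p in the split product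
lemma aux_main (p e : ℕ) (hp : p.Prime) (he : 1 ≤ e) (Q : Type*) [CommGroup Q] [Fintype Q]
    (hQdvd : Monoid.exponent Q ∣ p ^ e)
    (H : Subgroup (Multiplicative (ZMod (p ^ e)) × Q)) (hchar : H.Characteristic)
    (hcard : Nat.card H = p) :
    Monoid.exponent Q ∣ p ^ (e - 1) ∧
      H = (powMonoidHom (p ^ (e - 1)) :
        (Multiplicative (ZMod (p ^ e)) × Q) →* (Multiplicative (ZMod (p ^ e)) × Q)).range := by
  haveI : Fact p.Prime := ⟨hp⟩
  have hpe : (p : ℕ) ^ e ≠ 0 := pow_ne_zero e hp.pos.ne'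
  haveI : NeZero (p ^ e) := ⟨hpe⟩
  set A := Multiplicative (ZMod (p ^ e)) with hA
  -- pick a nontrivial element of H
  haveI : Nontrivial H := Finite.one_lt_card_iff_nontrivial.mp (by rw [hcard]; exact hp.one_lt)
  obtain ⟨h, hh, h1⟩ : ∃ h ∈ H, h ≠ (1 : A × Q) := by
    obtain ⟨h', hne⟩ := exists_ne (1 : H)
    exact ⟨h', h'.2, by simpa using hne⟩
  obtain ⟨hzpow, hord⟩ := aux_eq_zpowers hp hcard hh h1
  have hppow : h ^ p = 1 := orderOf_dvd_iff_pow_eq_one.mp (by rw [hord])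
  have ha_p : h.1 ^ p = 1 := congrArg Prod.fst hppow
  have hb_p : h.2 ^ p = 1 := congrArg Prod.snd hppow
  -- membership of images under automorphisms
  have hmem : ∀ σ : (A × Q) ≃* (A × Q), ∃ k : ℤ, h ^ k = σ h := by
    intro σ
    have := hchar.fixed σ
    have hσ : σ h ∈ H := by
      rw [← this] at hh
      exact hh
    rw [hzpow] at hσ
    exact Subgroup.mem_zpowers_iff.mp hσ
  -- Step 1 : the second component of h is trivial
  have hb1 : h.2 = 1 := by
    by_contra hb
    have hordb : orderOf h.2 = p := orderOf_eq_prime hb_p hb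
    obtain ⟨f, hf⟩ := aux_char_sep hQdvd hb
    obtain ⟨k, hk⟩ := hmem (shearFst f)
    have hk1 : h.1 ^ k = h.1 * f h.2 := congrArg Prod.fst hk
    have hk2 : h.2 ^ k = h.2 := congrArg Prod.snd hk
    have hbk : h.2 ^ (k - 1) = 1 := by
      rw [zpow_sub, hk2, zpow_one, mul_inv_cancel]
    have hdvd : (p : ℤ) ∣ (k - 1) := by
      rw [← hordb]
      exact orderOf_dvd_iff_zpow_eq_one.mpr hbk
    obtain ⟨s, hs⟩ := hdvd
    have hak : h.1 ^ (k - 1) = f h.2 := by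
      rw [zpow_sub, hk1, zpow_one, mul_comm h.1 (f h.2), mul_assoc, mul_inv_cancel, mul_one]
    rw [hs, zpow_mul, zpow_natCast, ha_p, one_zpow] at hak
    exact hf hak.symm
  -- Step 2 : the first component is nontrivial and h lies in the range of the power map
  have ha1 : h.1 ≠ 1 := by
    intro hc
    exact h1 (Prod.ext hc hb1)
  have hmemR : h ∈ (powMonoidHom (p ^ (e - 1)) :
      (A × Q) →* (A × Q)).range := by
    have hsmul : (p : ZMod (p ^ e)) * h.1.toAdd = 0 := by
      have := congrArg Multiplicative.toAdd ha_p
      rw [toAdd_pow, toAdd_one] at this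
      rwa [← nsmul_eq_mul]
    obtain ⟨x, hx⟩ := aux_zmod_torsion hp he h.1.toAdd hsmul
    refine ⟨(Multiplicative.ofAdd x, 1), ?_⟩
    rw [powMonoidHom_apply, Prod.pow_mk, one_pow]
    have : (Multiplicative.ofAdd x) ^ (p ^ (e - 1)) = h.1 := by
      rw [← ofAdd_nsmul, nsmul_eq_mul, hx, ofAdd_toAdd]
    rw [this, ← hb1]
  -- Step 3 : the exponent of Q divides p ^ (e - 1)
  have hQdvd' : Monoid.exponent Q ∣ p ^ (e - 1) := by
    by_contra hc
    obtain ⟨k, hk, hQk⟩ := (Nat.dvd_prime_pow hp).mp hQdvd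
    have hke : k = e := by
      by_contra hke
      exact hc (hQk ▸ pow_dvd_pow p (by omega))
    have hQexp : Monoid.exponent Q = p ^ e := by rw [hQk, hke]
    obtain ⟨Q', _, _, ⟨χ⟩⟩ := aux_split p e hp he Q hQexp
    set ψ : (A × Q) ≃* (A × (A × Q')) := (MulEquiv.refl A).prodCongr χ with hψ
    set H₂ := H.map ψ.toMonoidHom with hH₂
    have hchar₂ : H₂.Characteristic := aux_char_map ψ H hchar
    have hcard₂ : Nat.card H₂ = p := by rw [hH₂, aux_card_map, hcard]
    have hh₂ : ψ h ∈ H₂ := Subgroup.mem_map_of_mem _ hh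
    have h₂1 : ψ h ≠ 1 := by
      intro hc'
      exact h1 (by rwa [MulEquiv.map_eq_one_iff ψ] at hc')
    obtain ⟨hzpow₂, hord₂⟩ := aux_eq_zpowers hp hcard₂ hh₂ h₂1
    -- ψ h = (h.1, 1)
    have hψh : ψ h = (h.1, 1) := by
      rw [hψ]
      show (h.1, χ h.2) = (h.1, 1)
      rw [hb1, map_one]
    -- apply the shear (x, y) ↦ (x, y * (x, 1))
    set σ : (A × (A × Q')) ≃* (A × (A × Q')) := shearSnd (MonoidHom.inl A Q') with hσ
    have hσmem : σ (ψ h) ∈ H₂ := by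
      have := hchar₂.fixed σ
      rw [← this] at hh₂
      exact hh₂
    rw [hzpow₂] at hσmem
    obtain ⟨k', hk'⟩ := Subgroup.mem_zpowers_iff.mp hσmem
    rw [hψh] at hk'
    -- compare middle components
    have hmid : (1 : A) ^ k' = 1 * h.1 := congrArg (fun z : A × (A × Q') => z.2.1) hk'
    rw [one_zpow, one_mul] at hmid
    exact ha1 hmid.symm
  refine ⟨hQdvd', ?_⟩
  obtain ⟨-, hcardR⟩ := aux_R p e hp he Q hQdvd'
  have hle : H ≤ (powMonoidHom (p ^ (e - 1)) : (A × Q) →* (A × Q)).range := by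
    rw [hzpow]
    exact Subgroup.zpowers_le.mpr hmemR
  exact Subgroup.eq_of_le_of_card_ge hle (by rw [hcard, hcardR])

theorem stmt_12 {P : Type*} [CommGroup P] [Fintype P] [Nontrivial P]
    (p : ℕ) [Fact p.Prime] (hP : IsPGroup p P) :
    ((∃ H : Subgroup P, H.Characteristic ∧ Nat.card H = p) ↔
      (∃ (e : ℕ), 1 ≤ e ∧ ∃ (Q : Type) (_ : CommGroup Q) (_ : Fintype Q),
        Nonempty (P ≃* (Multiplicative (ZMod (p ^ e)) × Q)) ∧
          Monoid.exponent Q < p ^ e)) ∧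
    (∀ H K : Subgroup P, H.Characteristic → Nat.card H = p →
        K.Characteristic → Nat.card K = p → H = K) ∧
    (∀ H : Subgroup P, H.Characteristic → Nat.card H = p →
      ∀ e : ℕ, Monoid.exponent P = p ^ e →
        H = (powMonoidHom (p ^ (e - 1)) : P →* P).range) := by
  classical
  have hp : p.Prime := Fact.out
  -- the exponent of P is a power of p
  obtain ⟨n, hn⟩ := hP.exists_card_eq
  have hdvdcard : Monoid.exponent P ∣ p ^ n := by
    rw [← hn, Nat.card_eq_fintype_card]
    exact Group.exponent_dvd_card
  obtain ⟨e₀, he₀n, hexp⟩ := (Nat.dvd_prime_pow hp).mp hdvdcard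
  have he₀ : 1 ≤ e₀ := by
    by_contra hc
    have : e₀ = 0 := by omega
    rw [this, pow_zero] at hexp
    exact (Monoid.one_lt_exponent).ne' hexp
  obtain ⟨Q₀, _, _, ⟨ψ₀⟩⟩ := aux_split p e₀ hp he₀ P hexp
  have hpe : (p : ℕ) ^ e₀ ≠ 0 := pow_ne_zero e₀ hp.pos.ne'
  have hQ₀dvd : Monoid.exponent Q₀ ∣ p ^ e₀ := by
    refine Monoid.exponent_dvd_of_forall_pow_eq_one fun q => ?_
    have hx : (ψ₀.symm ((1 : Multiplicative (ZMod (p ^ e₀))), q)) ^ (p ^ e₀) = 1 := by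
      have hdv := Monoid.order_dvd_exponent (ψ₀.symm ((1 : Multiplicative (ZMod (p ^ e₀))), q))
      rw [hexp] at hdv
      exact orderOf_dvd_iff_pow_eq_one.mp hdv
    have := congrArg ψ₀ hx
    rw [map_pow, MulEquiv.apply_symm_apply, map_one] at this
    exact congrArg Prod.snd this
  -- the key transport: every characteristic subgroup of order p equals the power range
  have key : ∀ H : Subgroup P, H.Characteristic → Nat.card H = p →
      Monoid.exponent Q₀ ∣ p ^ (e₀ - 1) ∧
        H = (powMonoidHom (p ^ (e₀ - 1)) : P →* P).range := by
    intro H hc hcard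
    have h1 := aux_char_map ψ₀ H hc
    have h2 : Nat.card (H.map ψ₀.toMonoidHom) = p := by rw [aux_card_map, hcard]
    obtain ⟨hQd, hmap⟩ := aux_main p e₀ hp he₀ Q₀ hQ₀dvd _ h1 h2
    refine ⟨hQd, ?_⟩
    apply Subgroup.map_injective (f := ψ₀.toMonoidHom) ψ₀.injective
    rw [hmap, ← aux_map_powRange ψ₀]
  -- cardinality of the power range, given the divisibility
  have cardR : ∀ (e : ℕ), 1 ≤ e → ∀ (Q : Type) (_ : CommGroup Q) (_ : Fintype Q)
      (ψ : P ≃* (Multiplicative (ZMod (p ^ e)) × Q)),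
      Monoid.exponent Q ∣ p ^ (e - 1) →
      Nat.card ((powMonoidHom (p ^ (e - 1)) : P →* P).range) = p := by
    intro e he Q _ _ ψ hQd
    obtain ⟨-, hcardR⟩ := aux_R p e hp he Q hQd
    rw [← aux_map_powRange ψ, aux_card_map] at hcardR
    exact hcardR
  refine ⟨⟨?_, ?_⟩, ?_, ?_⟩
  · rintro ⟨H, hc, hcard⟩
    obtain ⟨hQd, -⟩ := key H hc hcard
    refine ⟨e₀, he₀, Q₀, inferInstance, inferInstance, ⟨ψ₀⟩, ?_⟩
    calc Monoid.exponent Q₀ ≤ p ^ (e₀ - 1) :=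
          Nat.le_of_dvd (pow_pos hp.pos _) hQd
    _ < p ^ e₀ := Nat.pow_lt_pow_right hp.one_lt (by omega)
  · rintro ⟨e, he, Q, _, _, ⟨ψ⟩, hlt⟩
    -- identify e with e₀
    have hpene : (p : ℕ) ^ e ≠ 0 := pow_ne_zero e hp.pos.ne'
    haveI : NeZero (p ^ e) := ⟨hpene⟩
    have hPG : p ^ e₀ = lcm (p ^ e) (Monoid.exponent Q) := by
      rw [← aux_exp_mult_zmod (p ^ e), ← Monoid.exponent_prod, ← Monoid.exponent_eq_of_mulEquiv ψ,
        hexp]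
    have hQdvd : Monoid.exponent Q ∣ p ^ e₀ := hPG ▸ dvd_lcm_right _ _
    obtain ⟨f, hfe, hQf⟩ := (Nat.dvd_prime_pow hp).mp hQdvd
    have hflt : f < e := by
      rw [hQf] at hlt
      exact (Nat.pow_lt_pow_iff_right hp.one_lt).mp hlt
    have hQe1 : Monoid.exponent Q ∣ p ^ (e - 1) := hQf ▸ pow_dvd_pow p (by omega)
    have hee₀ : e = e₀ := by
      have h1 : lcm (p ^ e) (Monoid.exponent Q) = p ^ e :=
        Nat.dvd_antisymm (lcm_dvd dvd_rfl (hQe1.trans (pow_dvd_pow p (by omega))))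
          (dvd_lcm_left _ _)
      rw [h1] at hPG
      exact (Nat.pow_right_injective hp.two_le hPG.symm)
    refine ⟨(powMonoidHom (p ^ (e₀ - 1)) : P →* P).range, aux_char_powRange _, ?_⟩
    subst hee₀
    exact cardR e he Q ‹_› ‹_› ψ hQe1
  · intro H K hcH hcardH hcK hcardK
    rw [(key H hcH hcardH).2, (key K hcK hcardK).2]
  · intro H hc hcard e hexpe
    have : e = e₀ := Nat.pow_right_injective hp.two_le (hexpe.symm.trans hexp)
    subst this
    exact (key H hc hcard).2
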